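/- Let 𝐇 be a connected etog with stem prefix x̄ and let ℍ be a linear graph with rel(ℍ) = 𝐇. Then the number of automorphisms of 𝐇 fixing x̄ pointwise equals the number of embeddings of 𝐇 into ℍ mapping x̄ to x̄; that is, #_{x̄→x̄}(𝐇, 𝐇) = #_{x̄→x̄}(𝐇, ℍ). -/
import Mathlib


/-- A tree-ordered graph (tog): a simple graph together with a partial order on its
vertices that is a tree order (sets of predecessors are linearly ordered) and that
guards the edge relation (endpoints of every edge are comparable). -/
structure Tog (V : Type) where
  G : SimpleGraph V
  le : V → V → Prop
  le_refl : ∀ v, le v v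
  le_antisymm : ∀ u v, le u v → le v u → u = v
  le_trans : ∀ u v w, le u v → le v w → le u w
  tree : ∀ x y z, le y x → le z x → le y z ∨ le z y
  guard : ∀ u v, G.Adj u v → le u v ∨ le v u

namespace Tog

variable {V W : Type}

/-- A linear graph is a tog whose order is total. -/
def IsLinear (H : Tog V) : Prop := ∀ u v, H.le u v ∨ H.le v u

/-- An embedding of a tog `H` into a tog `G`: an injective map preserving edges
and the order. -/
def IsEmbedding (H : Tog V) (G : Tog W) (φ : V → W) : Prop :=
  Function.Injective φ ∧ (∀ u v, H.G.Adj u v → G.G.Adj (φ u) (φ v)) ∧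
    ∀ u v, H.le u v → G.le (φ u) (φ v)

/-- An embedding of the induced subtog `H[A]` into `G`, given as a map defined on
all of `V` but constrained only on `A`.  -/
def IsEmbeddingOn (H : Tog V) (G : Tog W) (A : Set V) (φ : V → W) : Prop :=
  Set.InjOn φ A ∧ (∀ u ∈ A, ∀ v ∈ A, H.G.Adj u v → G.G.Adj (φ u) (φ v)) ∧
    ∀ u ∈ A, ∀ v ∈ A, H.le u v → G.le (φ u) (φ v)

/-- The stem of a tog: the set of vertices comparable with every vertex,
i.e. the maximal linearly ordered downward chain lying below all other vertices. -/
def stem (H : Tog V) : Set V := {u | ∀ v, H.le u v ∨ H.le v u}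

/-- `s` is a stem prefix of `H`: a downward-closed subset of the stem. -/
def IsStemPrefix (H : Tog V) (s : Set V) : Prop :=
  s ⊆ H.stem ∧ ∀ u ∈ H.stem, ∀ v ∈ s, H.le u v → u ∈ s

/-- Leaves of a tog: vertices maximal in the tree order. -/
def leaves (H : Tog V) : Set V := {u | ∀ v, H.le u v → v = u}

/-- The vertex set of the piece induced by a set `S` of leaves: the union of the
root paths of the members of `S`. -/
def pieceSet (H : Tog V) (S : Set V) : Set V := {y | ∃ x ∈ S, H.le y x}

/-- `H = H[A₁] ⊕ H[A₂]`: the vertex sets `A₁`, `A₂` are pieces of `H` induced by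
nonempty leaf sets that partition the leaves of `H`. -/
def PieceDecomp (H : Tog V) (A₁ A₂ : Set V) : Prop :=
  ∃ S₁ S₂ : Set V, S₁.Nonempty ∧ S₂.Nonempty ∧ Disjoint S₁ S₂ ∧
    S₁ ∪ S₂ = H.leaves ∧ A₁ = H.pieceSet S₁ ∧ A₂ = H.pieceSet S₂

/-- The induced subtog on a vertex set `A`. -/
def induce (H : Tog V) (A : Set V) : Tog A where
  G := H.G.induce A
  le u v := H.le u v
  le_refl v := H.le_refl v
  le_antisymm u v h1 h2 := Subtype.ext (H.le_antisymm _ _ h1 h2)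
  le_trans u v w := H.le_trans _ _ _
  tree x y z := H.tree _ _ _
  guard u v h := H.guard _ _ h

/-- The ancestor relation of the elimination tree of a (connected) linear graph `H`:
`u` is an ancestor of `v` iff there is a walk from `u` to `v` all of whose vertices
come after `u` in the linear order. -/
def relLe (H : Tog V) (u v : V) : Prop :=
  ∃ p : H.G.Walk u v, ∀ w ∈ p.support, H.le u w

/-- The tree order relaxation `rel(H)` of a linear graph `H`: the tog on the same
graph whose order is the ancestor relation of the elimination tree of `H`. -/
def relax (H : Tog V) (hlin : H.IsLinear) : Tog V where
  G := H.G
  le := H.relLe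
  le_refl v := ⟨SimpleGraph.Walk.nil, by
    intro w hw
    simp only [SimpleGraph.Walk.support_nil, List.mem_singleton] at hw
    subst hw; exact H.le_refl w⟩
  le_antisymm u v h1 h2 := by
    obtain ⟨p, hp⟩ := h1; obtain ⟨q, hq⟩ := h2
    exact H.le_antisymm u v (hp v p.end_mem_support) (hq u q.end_mem_support)
  le_trans u v w h1 h2 := by
    obtain ⟨p, hp⟩ := h1; obtain ⟨q, hq⟩ := h2
    refine ⟨p.append q, ?_⟩
    intro x hx
    rcases (SimpleGraph.Walk.mem_support_append_iff _ _).1 hx with h | h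
    · exact hp x h
    · exact H.le_trans u v x (hp v p.end_mem_support) (hq x h)
  tree x y z h1 h2 := by
    obtain ⟨p, hp⟩ := h1; obtain ⟨q, hq⟩ := h2
    rcases hlin y z with h | h
    · left
      refine ⟨p.append q.reverse, ?_⟩
      intro w hw
      rcases (SimpleGraph.Walk.mem_support_append_iff _ _).1 hw with hw | hw
      · exact hp w hw
      · rw [SimpleGraph.Walk.support_reverse, List.mem_reverse] at hw
        exact H.le_trans y z w h (hq w hw)
    · right
      refine ⟨q.append p.reverse, ?_⟩
      intro w hw
      rcases (SimpleGraph.Walk.mem_support_append_iff _ _).1 hw with hw | hw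
      · exact hq w hw
      · rw [SimpleGraph.Walk.support_reverse, List.mem_reverse] at hw
        exact H.le_trans z y w h (hp w hw)
  guard u v h := by
    rcases H.guard u v h with hle | hle
    · left
      refine ⟨SimpleGraph.Walk.cons h SimpleGraph.Walk.nil, ?_⟩
      intro w hw
      simp only [SimpleGraph.Walk.support_cons, SimpleGraph.Walk.support_nil,
        List.mem_cons, List.mem_singleton] at hw
      rcases hw with rfl | hw
      · exact H.le_refl w
      · rcases hw with rfl | hw
        · exact hle
        · simp at hw
    · right
      refine ⟨SimpleGraph.Walk.cons h.symm SimpleGraph.Walk.nil, ?_⟩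
      intro w hw
      simp only [SimpleGraph.Walk.support_cons, SimpleGraph.Walk.support_nil,
        List.mem_cons, List.mem_singleton] at hw
      rcases hw with rfl | hw
      · exact H.le_refl w
      · rcases hw with rfl | hw
        · exact hle
        · simp at hw

/-- A tog is an etog (elimination-ordered graph) if it is the tree order relaxation
of some linear graph. -/
def IsEtog (D : Tog V) : Prop := ∃ (L : Tog V) (hlin : L.IsLinear), D = L.relax hlin

/-- A pattern relaxation of a pattern graph `H₀`: the relaxation of some linear
ordering of `H₀`. -/
def IsPatternRelaxation (H₀ : SimpleGraph V) (HH : Tog V) : Prop :=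
  ∃ (L : Tog V) (hlin : L.IsLinear), L.G = H₀ ∧ HH = L.relax hlin

/-- Weakly `r`-reachable vertices from `u` in an ordered graph `G`. -/
def wreach (G : Tog W) (r : ℕ) (u : W) : Set W :=
  {v | ∃ p : G.G.Walk u v, p.IsPath ∧ p.length ≤ r ∧ ∀ w ∈ p.support, G.le v w}

/-- Strongly `r`-reachable vertices from `u` in an ordered graph `G`. -/
def sreach (G : Tog W) (r : ℕ) (u : W) : Set W :=
  {v | G.le v u ∧ ∃ p : G.G.Walk u v, p.IsPath ∧ p.length ≤ r ∧
    ∀ w ∈ p.support, w ≠ v → G.le u w}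

/-- The embedding count `#_{x̄→ȳ}(H, G)`: the number of embeddings of `H` into `G`
mapping the (ordered) set `xb` onto `yb`. -/
noncomputable def embCount (H : Tog V) (G : Tog W) (xb : Set V) (yb : Set W) : ℕ :=
  {φ : V → W | H.IsEmbedding G φ ∧ φ '' xb = yb}.ncard

/-- The embedding count of the piece `H[A]` into `G`. -/
noncomputable def pieceEmbCount (H : Tog V) (G : Tog W) (A : Set V)
    (xb : Set V) (yb : Set W) : ℕ :=
  {φ : A → W | (H.induce A).IsEmbedding G φ ∧ φ '' (Subtype.val ⁻¹' xb) = yb}.ncard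

/-- The relaxed embedding count `#_{x̄→ȳ}(H, G | H₁, H₂)`: the number of maps whose
restrictions to the pieces `H[A₁]` and `H[A₂]` are embeddings into `G` and which map
`xb` onto `yb`. -/
noncomputable def relEmbCount (H : Tog V) (G : Tog W) (A₁ A₂ : Set V)
    (xb : Set V) (yb : Set W) : ℕ :=
  {φ : V → W | H.IsEmbeddingOn G A₁ φ ∧ H.IsEmbeddingOn G A₂ φ ∧ φ '' xb = yb}.ncard

/-- A defect of the pieces `H[A₁]`, `H[A₂]` (decomposed along the stem prefix `xb`):
an etog `D` into which `H` does not embed, `H[A₁]` embeds via the identity, `H[A₂]`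
embeds via a map `φ` that is the identity on `(A₂ \ A₁) ∪ xb`, and whose vertex set
is `A₁ ∪ φ(A₂)`. -/
def IsDefect (H : Tog V) (A₁ A₂ xb : Set V) (D : Tog V) : Prop :=
  IsEtog D ∧
  (¬ ∃ ψ : V → V, H.IsEmbedding D ψ) ∧
  H.IsEmbeddingOn D A₁ id ∧
  ∃ φ : V → V, H.IsEmbeddingOn D A₂ φ ∧ (∀ v ∈ (A₂ \ A₁) ∪ xb, φ v = v) ∧
    A₁ ∪ φ '' A₂ = Set.univ

/-- Automorphism of a tog. -/
def IsAuto (H : Tog V) (φ : V → V) : Prop :=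
  Function.Bijective φ ∧ (∀ u v, H.G.Adj u v ↔ H.G.Adj (φ u) (φ v)) ∧
    ∀ u v, H.le u v ↔ H.le (φ u) (φ v)

/-- The induced subtogs `H[xb]` and `G[yb]` are isomorphic. -/
def IndIso (H : Tog V) (G : Tog W) (xb : Set V) (yb : Set W) : Prop :=
  ∃ f : V → W, Set.BijOn f xb yb ∧ ∀ u ∈ xb, ∀ v ∈ xb,
    (H.G.Adj u v ↔ G.G.Adj (f u) (f v)) ∧ (H.le u v ↔ G.le (f u) (f v))

end Tog


/-- An injective self-map of a finite type that preserves a relation also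
reflects it. -/
lemma aux_reflect {α : Type} [Finite α] {R : α → α → Prop} {f : α → α}
    (hf : Function.Injective f) (h : ∀ u v, R u v → R (f u) (f v)) :
    ∀ u v, R (f u) (f v) → R u v := by
  intro u v hR
  let F : {p : α × α // R p.1 p.2} → {p : α × α // R p.1 p.2} :=
    fun p => ⟨(f p.1.1, f p.1.2), h _ _ p.2⟩
  have hFinj : Function.Injective F := by
    intro a b hab
    apply Subtype.ext
    have h1 : f a.1.1 = f b.1.1 := congrArg (fun q => q.1.1) hab
    have h2 : f a.1.2 = f b.1.2 := congrArg (fun q => q.1.2) hab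
    exact Prod.ext (hf h1) (hf h2)
  have hFsurj : Function.Surjective F := Finite.injective_iff_surjective.mp hFinj
  obtain ⟨⟨⟨a, b⟩, hab⟩, hEq⟩ := hFsurj ⟨(f u, f v), hR⟩
  have h1 : f a = f u := congrArg (fun q => q.1.1) hEq
  have h2 : f b = f v := congrArg (fun q => q.1.2) hEq
  rw [hf h1, hf h2] at hab
  exact hab

/-- A finite nonempty set totally preordered by `R` has a minimum. -/
lemma aux_min {α : Type} {R : α → α → Prop}
    (hrefl : ∀ a, R a a) (htrans : ∀ a b c, R a b → R b c → R a c)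
    (s : Finset α) :
    s.Nonempty → (∀ a ∈ s, ∀ b ∈ s, R a b ∨ R b a) →
      ∃ u ∈ s, ∀ v ∈ s, R u v := by
  classical
  induction s using Finset.cons_induction with
  | empty => intro hs _; exact absurd hs (by simp)
  | cons a s ha ih =>
    intro _ htot
    by_cases hse : s.Nonempty
    · obtain ⟨u, hu, hmin⟩ := ih hse (fun x hx y hy =>
        htot x (by simp [hx]) y (by simp [hy]))
      rcases htot a (by simp) u (by simp [hu]) with h1 | h1
      · refine ⟨a, by simp, fun v hv => ?_⟩
        rcases Finset.mem_cons.mp hv with rfl | hv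
        · exact hrefl _
        · exact htrans _ _ _ h1 (hmin v hv)
      · refine ⟨u, by simp [hu], fun v hv => ?_⟩
        rcases Finset.mem_cons.mp hv with rfl | hv
        · exact h1
        · exact hmin v hv
    · have hes : s = ∅ := Finset.not_nonempty_iff_eq_empty.mp hse
      subst hes
      refine ⟨a, by simp, fun v hv => ?_⟩
      rcases Finset.mem_cons.mp hv with rfl | hv
      · exact hrefl _
      · simp at hv

/-- Lemma auto-linear: for a connected etog `𝐇 = rel(ℍ)` with stem
prefix `x̄`, the number of automorphisms of `𝐇` fixing `x̄` pointwise equals the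
number of embeddings of `𝐇` into `ℍ` mapping `x̄` to `x̄`. -/
theorem auto_linear {V : Type} [Fintype V]
    (HH : Tog V) (hconn : HH.G.Connected)
    (xb : Set V) (hxb : HH.IsStemPrefix xb)
    (L : Tog V) (hlin : L.IsLinear) (hrel : L.relax hlin = HH) :
    {φ : V → V | HH.IsAuto φ ∧ ∀ v ∈ xb, φ v = v}.ncard =
      Tog.embCount HH L xb xb := by
  classical
  subst hrel
  set HH := L.relax hlin with hHH
  -- relLe implies the linear order
  have hrelle : ∀ u v, HH.le u v → L.le u v := by
    rintro u v ⟨p, hp⟩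
    exact hp v p.end_mem_support
  have hset : {φ : V → V | HH.IsAuto φ ∧ ∀ v ∈ xb, φ v = v} =
      {φ : V → V | HH.IsEmbedding L φ ∧ φ '' xb = xb} := by
    ext φ
    simp only [Set.mem_setOf_eq]
    constructor
    · rintro ⟨⟨hbij, hadj, hle⟩, hfix⟩
      refine ⟨⟨hbij.injective, fun u v h => (hadj u v).mp h,
          fun u v h => hrelle _ _ ((hle u v).mp h)⟩, ?_⟩
      ext a
      constructor
      · rintro ⟨v, hv, rfl⟩
        rw [hfix v hv]; exact hv
      · intro ha
        exact ⟨a, ha, hfix a ha⟩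
    · rintro ⟨⟨hinj, hadj, hle⟩, himg⟩
      -- φ preserves the relaxed order
      have hpres : ∀ u v, HH.le u v → HH.le (φ u) (φ v) := by
        rintro u v ⟨p, hp⟩
        let f : L.G →g L.G := ⟨φ, fun {a b} h => hadj a b h⟩
        refine ⟨p.map f, ?_⟩
        intro w hw
        rw [SimpleGraph.Walk.support_map, List.mem_map] at hw
        obtain ⟨x, hx, rfl⟩ := hw
        exact hle u x ⟨p.takeUntil x hx,
          fun y hy => hp y (p.support_takeUntil_subset hx hy)⟩
      have hreflAdj := aux_reflect (R := L.G.Adj) hinj hadj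
      have hreflLe := aux_reflect (R := HH.le) hinj hpres
      -- φ fixes xb pointwise
      have hfix : ∀ v ∈ xb, φ v = v := by
        by_contra hc
        push_neg at hc
        obtain ⟨v0, hv0, hv0ne⟩ := hc
        have hTfin : {v | v ∈ xb ∧ φ v ≠ v}.Finite := Set.toFinite _
        obtain ⟨u, hu, hmin⟩ := aux_min (R := HH.le) HH.le_refl HH.le_trans
          hTfin.toFinset ⟨v0, by simp [Set.Finite.mem_toFinset, hv0, hv0ne]⟩
          (fun a ha b hb => by
            rw [Set.Finite.mem_toFinset] at ha hb
            exact hxb.1 ha.1 b)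
        rw [Set.Finite.mem_toFinset] at hu
        obtain ⟨huxb, hune⟩ := hu
        -- u is in the image of xb
        have : u ∈ φ '' xb := by rw [himg]; exact huxb
        obtain ⟨w, hwxb, hwu⟩ := this
        have hwne : w ≠ u := by rintro rfl; exact hune hwu
        rcases hxb.1 huxb w with h1 | h1
        · -- HH.le u w : then L.le (φ u) u and L.le u (φ u) give φ u = u
          have h2 : L.le (φ u) u := by
            have := hle u w h1; rw [hwu] at this; exact this
          have hphiu : φ u ∈ xb := by rw [← himg]; exact ⟨u, huxb, rfl⟩
          have h3 : HH.le u (φ u) ∨ HH.le (φ u) u := hxb.1 huxb (φ u)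
          rcases h3 with h3 | h3
          · exact hune (L.le_antisymm _ _ h2 (hrelle _ _ h3))
          · -- HH.le (φ u) u with φ u ∈ xb : φ u is below the minimum
            by_cases h4 : φ (φ u) = φ u
            · exact hune (hinj h4)
            · have : HH.le u (φ u) := hmin (φ u)
                (by rw [Set.Finite.mem_toFinset]; exact ⟨hphiu, h4⟩)
              exact hune (HH.le_antisymm _ _ h3 this)
        · -- HH.le w u : then w is below the minimum so fixed, contradiction
          by_cases h4 : φ w = w
          · exact hwne (by rw [← hwu, h4])
          · have : HH.le u w := hmin w
              (by rw [Set.Finite.mem_toFinset]; exact ⟨hwxb, h4⟩)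
            exact hwne (HH.le_antisymm _ _ h1 this)
      refine ⟨⟨Finite.injective_iff_bijective.mp hinj,
        fun u v => ⟨fun h => hadj u v h, fun h => hreflAdj u v h⟩,
        fun u v => ⟨fun h => hpres u v h, fun h => hreflLe u v h⟩⟩, hfix⟩
  rw [Tog.embCount]
  exact congrArg Set.ncard hset
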